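/- Let W be a Whitney covering of a domain Ω ⊂ ℝ^d (so C_W ℓ(Q) ≤ dist(Q, ∂Ω) ≤ 4C_W ℓ(Q) for all Q ∈ W), let Q ∈ W, η > 0 and r > 0. Then Σ over cubes S ∈ W with D(Q,S) > r of (∫_S g dm) / D(Q,S)^{d+η} ≤ C_d · (inf_{y∈Q} Mg(y)) / r^η, where D(Q,S) = ℓ(Q)+ℓ(S)+dist(Q,S) is the long distance and M is the non-centered maximal operator. -/

import Mathlib

open MeasureTheory ENNReal

/-- An axis-parallel cube in `ℝ^d`, identified with the closed ball of radius `side/2`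
around its center in the sup metric on `Fin d → ℝ`. -/
structure Cube (d : ℕ) where
  center : Fin d → ℝ
  side : ℝ
  side_pos : 0 < side

/-- The set of points of a cube. -/
def Cube.toSet {d : ℕ} (Q : Cube d) : Set (Fin d → ℝ) :=
  Metric.closedBall Q.center (Q.side / 2)

/-- Distance between two sets. -/
noncomputable def setDist {d : ℕ} (A B : Set (Fin d → ℝ)) : ℝ :=
  sInf (Set.image2 dist A B)

/-- The long distance `D(Q,S) = ℓ(Q) + ℓ(S) + dist(Q,S)` between two cubes. -/
noncomputable def longDist {d : ℕ} (Q S : Cube d) : ℝ :=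
  Q.side + S.side + setDist Q.toSet S.toSet

/-- A Whitney covering of `Ω`: a family of essentially disjoint (dyadic-type) cubes whose
union is `Ω`, with side-lengths comparable to the distance to `∂Ω`, and finite
superposition of the dilated cubes `50Q`. -/
structure WhitneyCovering (d : ℕ) (Ω : Set (Fin d → ℝ)) where
  cubes : Set (Cube d)
  covers : (⋃ Q ∈ cubes, Q.toSet) = Ω
  essDisjoint : ∀ Q ∈ cubes, ∀ S ∈ cubes, Q ≠ S →
    interior Q.toSet ∩ interior S.toSet = ∅
  CW : ℝ
  one_le_CW : 1 ≤ CW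
  dist_lb : ∀ Q ∈ cubes, CW * Q.side ≤ setDist Q.toSet (frontier Ω)
  dist_ub : ∀ Q ∈ cubes, setDist Q.toSet (frontier Ω) ≤ 4 * CW * Q.side
  finiteOverlap : ∃ N : ℕ, ∀ x : Fin d → ℝ,
    {Q ∈ cubes | x ∈ Metric.closedBall Q.center (25 * Q.side)}.Finite ∧
    {Q ∈ cubes | x ∈ Metric.closedBall Q.center (25 * Q.side)}.ncard ≤ N

/-- `S ∈ SH_ρ(P)` : the cube `S` of the covering lies in the `ρ`-shadow of `P`, i.e.
`S ⊆ B(x_P, ρ ℓ(P))`. -/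
def memShadow {d : ℕ} {Ω : Set (Fin d → ℝ)} (W : WhitneyCovering d Ω) (ρ : ℝ)
    (S P : Cube d) : Prop :=
  S ∈ W.cubes ∧ P ∈ W.cubes ∧ S.toSet ⊆ Metric.closedBall P.center (ρ * P.side)

/-- An `ε`-admissible chain of Whitney cubes joining `Q` to `S`. -/
structure AdmissibleChain {d : ℕ} {Ω : Set (Fin d → ℝ)} (W : WhitneyCovering d Ω)
    (ε : ℝ) (Q S : Cube d) where
  M : ℕ
  M_pos : 0 < M
  c : Fin M → Cube d
  mem : ∀ j, c j ∈ W.cubes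
  first : c ⟨0, M_pos⟩ = Q
  last : c ⟨M - 1, Nat.sub_lt M_pos Nat.one_pos⟩ = S
  neighbors : ∀ (j : ℕ) (h : j + 1 < M),
    ((c ⟨j, Nat.lt_of_succ_lt h⟩).toSet ∩ (c ⟨j + 1, h⟩).toSet).Nonempty
  length_le : ∑ j, (c j).side ≤ ε⁻¹ * longDist Q S
  j₀ : Fin M
  growth₁ : ∀ j : Fin M, j ≤ j₀ → ε * longDist Q (c j) ≤ (c j).side
  growth₂ : ∀ j : Fin M, j₀ ≤ j → ε * longDist (c j) S ≤ (c j).side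

/-- `Ω` (with Whitney covering `W`) is an `ε`-uniform domain: any two Whitney cubes are
joined by an `ε`-admissible chain. -/
def IsUniformDomain {d : ℕ} {Ω : Set (Fin d → ℝ)} (W : WhitneyCovering d Ω) (ε : ℝ) : Prop :=
  ∀ Q ∈ W.cubes, ∀ S ∈ W.cubes, Nonempty (AdmissibleChain W ε Q S)

/-- The non-centered Hardy–Littlewood maximal function, taken over cubes
(closed balls in the sup metric on `Fin d → ℝ`) containing `x`. -/
noncomputable def maximal (d : ℕ) (g : (Fin d → ℝ) → ℝ≥0∞) (x : Fin d → ℝ) : ℝ≥0∞ :=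
  ⨆ (c : Fin d → ℝ) (r : ℝ) (_ : 0 < r) (_ : x ∈ Metric.closedBall c r),
    (∫⁻ y in Metric.closedBall c r, g y) / volume (Metric.closedBall c r)

section Aux
variable {d : ℕ}

lemma Cube.center_mem (Q : Cube d) : Q.center ∈ Q.toSet :=
  Metric.mem_closedBall_self (by linarith [Q.side_pos])

lemma setDist_nonneg (A B : Set (Fin d → ℝ)) : 0 ≤ setDist A B :=
  Real.sInf_nonneg (by rintro x ⟨a, _, b, _, rfl⟩; exact dist_nonneg)

lemma longDist_pos (Q S : Cube d) : 0 < longDist Q S := by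
  have := setDist_nonneg Q.toSet S.toSet
  have := Q.side_pos; have := S.side_pos
  unfold longDist; linarith

lemma side_le_longDist (Q S : Cube d) : Q.side ≤ longDist Q S := by
  have := setDist_nonneg Q.toSet S.toSet
  have := S.side_pos; unfold longDist; linarith

lemma dist_center_le (Q S : Cube d) {y : Fin d → ℝ} (hy : y ∈ S.toSet) :
    dist y Q.center ≤ longDist Q S := by
  have key : ∀ a ∈ Q.toSet, ∀ b ∈ S.toSet,
      dist y Q.center - S.side - Q.side / 2 ≤ dist a b := by
    intro a ha b hb
    have h1 : dist y b ≤ S.side := by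
      calc dist y b ≤ dist y S.center + dist S.center b := dist_triangle _ _ _
        _ ≤ S.side/2 + S.side/2 := by
            have := Metric.mem_closedBall.1 hy
            have hb' := Metric.mem_closedBall.1 hb
            rw [dist_comm] at hb'; linarith
        _ = S.side := by ring
    have h2 : dist a Q.center ≤ Q.side / 2 := Metric.mem_closedBall.1 ha
    have := dist_triangle y b Q.center
    have := dist_triangle b a Q.center
    rw [dist_comm b a] at this
    linarith
  have h3 : dist y Q.center - S.side - Q.side / 2 ≤ setDist Q.toSet S.toSet := by
    have hne : (Set.image2 dist Q.toSet S.toSet).Nonempty :=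
      ⟨dist Q.center S.center, Set.mem_image2_of_mem Q.center_mem S.center_mem⟩
    apply le_csInf hne
    rintro x ⟨a, ha, b, hb, rfl⟩; exact key a ha b hb
  have := Q.side_pos
  unfold longDist; linarith

end Aux

section Aux2
variable {d : ℕ} {Ω : Set (Fin d → ℝ)}

lemma WhitneyCovering.countable_cubes (W : WhitneyCovering d Ω) : W.cubes.Countable := by
  apply Set.PairwiseDisjoint.countable_of_isOpen
    (s := fun Q : Cube d => Metric.ball Q.center (Q.side / 2))
  · intro Q hQ S hS hne
    have h := W.essDisjoint Q hQ S hS hne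
    rw [Cube.toSet, Cube.toSet, interior_closedBall _ (by have := Q.side_pos; positivity),
      interior_closedBall _ (by have := S.side_pos; positivity)] at h
    exact Set.disjoint_iff_inter_eq_empty.2 h
  · exact fun _ _ => Metric.isOpen_ball
  · exact fun Q _ => ⟨Q.center, Metric.mem_ball_self (by linarith [Q.side_pos])⟩

lemma WhitneyCovering.inter_null (W : WhitneyCovering d Ω) {Q S : Cube d}
    (hQ : Q ∈ W.cubes) (hS : S ∈ W.cubes) (hne : Q ≠ S) :
    volume (Q.toSet ∩ S.toSet) = 0 := by
  have h := W.essDisjoint Q hQ S hS hne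
  rw [Cube.toSet, Cube.toSet, interior_closedBall _ (by have := Q.side_pos; positivity),
    interior_closedBall _ (by have := S.side_pos; positivity)] at h
  have hsub : Q.toSet ∩ S.toSet ⊆
      Metric.sphere Q.center (Q.side / 2) ∪ Metric.sphere S.center (S.side / 2) := by
    rintro x ⟨hxQ, hxS⟩
    rw [Cube.toSet, ← Metric.ball_union_sphere] at hxQ hxS
    rcases hxQ with hxQ | hxQ
    · rcases hxS with hxS | hxS
      · exact absurd (Set.mem_inter hxQ hxS) (by rw [h]; exact Set.notMem_empty x)
      · exact Or.inr hxS
    · exact Or.inl hxQ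
  refine measure_mono_null hsub (measure_union_null ?_ ?_) <;>
    exact Measure.addHaar_sphere_of_ne_zero volume _ (by
      first
        | (have := Q.side_pos; positivity)
        | (have := S.side_pos; positivity))

lemma le_maximal (g : (Fin d → ℝ) → ℝ≥0∞) (c : Fin d → ℝ) {R : ℝ} (hR : 0 < R)
    {y : Fin d → ℝ} (hy : y ∈ Metric.closedBall c R) :
    (∫⁻ z in Metric.closedBall c R, g z) / volume (Metric.closedBall c R) ≤ maximal d g y :=
  le_iSup_of_le c (le_iSup_of_le R (le_iSup_of_le hR (le_iSup_of_le hy le_rfl)))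

end Aux2

lemma key_real (d : ℕ) {η r : ℝ} (hr : 0 < r) (k : ℕ) :
    ((2:ℝ)^(k+3)*r)^d / ((2:ℝ)^k*r)^((d:ℝ)+η)
      = 8^d * ((2:ℝ)^(-η:ℝ))^k / r^η := by
  have h2 : (0:ℝ) < 2 := by norm_num
  have hA : (0:ℝ) < 2^k := by positivity
  have hAr : (0:ℝ) < 2^k * r := by positivity
  have e1 : ((2:ℝ)^k*r)^((d:ℝ)+η) = ((2:ℝ)^k*r)^(d:ℕ) * ((2:ℝ)^k*r)^η := by
    rw [Real.rpow_add hAr, Real.rpow_natCast]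
  have e2 : ((2:ℝ)^k*r)^η = (2:ℝ)^((k:ℝ)*η) * r^η := by
    rw [Real.mul_rpow hA.le hr.le, ← Real.rpow_natCast (2:ℝ) k, ← Real.rpow_mul h2.le]
  have e3 : ((2:ℝ)^(-η:ℝ))^k = ((2:ℝ)^((k:ℝ)*η))⁻¹ := by
    rw [← Real.rpow_natCast ((2:ℝ)^(-η:ℝ)) k, ← Real.rpow_mul h2.le, ← Real.rpow_neg h2.le]
    ring_nf
  have e4 : ((2:ℝ)^(k+3)*r)^d = 8^d * ((2:ℝ)^k*r)^d := by
    rw [← mul_pow]; ring_nf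
  have hB : (0:ℝ) < (2:ℝ)^((k:ℝ)*η) := Real.rpow_pos_of_pos h2 _
  rw [e1, e2, e3, e4]
  field_simp

lemma group_bound (d : ℕ) {η : ℝ} (hη : 0 < η) {Ω : Set (Fin d → ℝ)}
    (W : WhitneyCovering d Ω) (Q : Cube d)
    (g : (Fin d → ℝ) → ℝ≥0∞) {r : ℝ} (hr : 0 < r) (k : ℕ) :
    ∑' S : {S : {S : Cube d // S ∈ W.cubes ∧ r < longDist Q S} //
        Nat.log 2 ⌊longDist Q S.1 / r⌋₊ = k},
        (∫⁻ y in (S.1 : Cube d).toSet, g y) /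
          ENNReal.ofReal (longDist Q (S.1 : Cube d) ^ ((d : ℝ) + η)) ≤
      (⨅ y ∈ Q.toSet, maximal d g y) *
        ENNReal.ofReal (8 ^ d * ((2:ℝ) ^ (-η : ℝ)) ^ k) / ENNReal.ofReal (r ^ η) := by
  set ι := {S : Cube d // S ∈ W.cubes ∧ r < longDist Q S}
  set ιk := {S : ι // Nat.log 2 ⌊longDist Q S.1 / r⌋₊ = k}
  rcases isEmpty_or_nonempty ιk with h | hιne
  · rw [tsum_empty]; exact zero_le
  obtain ⟨S₀⟩ := hιne
  -- basic powers
  have h2 : (0:ℝ) < 2 := by norm_num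
  have hkr : (0:ℝ) < 2^k * r := by positivity
  -- bounds on longDist for members of ιk
  have hupper : ∀ S : ιk, longDist Q S.1.1 < 2^(k+1) * r := by
    intro S
    have hfl : (⌊longDist Q S.1.1 / r⌋₊ : ℝ) + 1 ≤ (2:ℝ)^(k+1) := by
      have := Nat.lt_pow_succ_log_self (b := 2) one_lt_two ⌊longDist Q S.1.1 / r⌋₊
      rw [S.2] at this
      have : (⌊longDist Q S.1.1 / r⌋₊ + 1 : ℕ) ≤ 2^(k+1) := this
      exact_mod_cast this
    have h1 : longDist Q S.1.1 / r < (⌊longDist Q S.1.1 / r⌋₊ : ℝ) + 1 :=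
      Nat.lt_floor_add_one _
    have := h1.trans_le hfl
    calc longDist Q S.1.1 = (longDist Q S.1.1 / r) * r := by field_simp
      _ < (2:ℝ)^(k+1) * r := by exact mul_lt_mul_of_pos_right this hr
  have hlower : ∀ S : ιk, (2:ℝ)^k * r ≤ longDist Q S.1.1 := by
    intro S
    have hgt : 1 ≤ longDist Q S.1.1 / r := le_of_lt ((one_lt_div hr).2 S.1.2.2)
    have hfl0 : ⌊longDist Q S.1.1 / r⌋₊ ≠ 0 := (Nat.floor_pos.2 hgt).ne'
    have h1 : (2:ℝ)^k ≤ (⌊longDist Q S.1.1 / r⌋₊ : ℝ) := by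
      have := Nat.pow_log_le_self 2 hfl0
      rw [S.2] at this
      exact_mod_cast this
    have h2' : (⌊longDist Q S.1.1 / r⌋₊ : ℝ) ≤ longDist Q S.1.1 / r :=
      Nat.floor_le (by positivity)
    calc (2:ℝ)^k * r ≤ (longDist Q S.1.1 / r) * r :=
      mul_le_mul_of_nonneg_right (h1.trans h2') hr.le
      _ = longDist Q S.1.1 := by field_simp
  -- the big ball
  set R : ℝ := 2^(k+2) * r with hRdef
  have hR : 0 < R := by positivity
  set B : Set (Fin d → ℝ) := Metric.closedBall Q.center R with hBdef
  have hQB : Q.toSet ⊆ B := by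
    intro y hy
    have h1 : dist y Q.center ≤ Q.side / 2 := Metric.mem_closedBall.1 hy
    have h2'' : Q.side ≤ longDist Q S₀.1.1 := side_le_longDist _ _
    have h3 : longDist Q S₀.1.1 < 2^(k+1) * r := hupper S₀
    have h4 : (2:ℝ)^(k+1) * r ≤ 2 * (2^(k+2) * r) := by
      have : (2:ℝ)^(k+1) ≤ 2 * 2^(k+2) := by
        have : (2:ℝ)^(k+1) ≤ 2^(k+2) := pow_le_pow_right₀ one_le_two (by omega)
        nlinarith [pow_pos h2 (k+2)]
      nlinarith
    exact Metric.mem_closedBall.2 (by rw [hRdef]; linarith)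
  have hSB : ∀ S : ιk, (S.1.1 : Cube d).toSet ⊆ B := by
    intro S y hy
    have h1 : dist y Q.center ≤ longDist Q S.1.1 := dist_center_le _ _ hy
    have h3 : longDist Q S.1.1 < 2^(k+1) * r := hupper S
    have h4 : (2:ℝ)^(k+1) * r ≤ 2^(k+2) * r := by
      have : (2:ℝ)^(k+1) ≤ 2^(k+2) := pow_le_pow_right₀ one_le_two (by omega)
      nlinarith
    exact Metric.mem_closedBall.2 (by rw [hRdef]; linarith)
  -- countability
  haveI : Countable ι := by
    have h1 : ({S : Cube d | S ∈ W.cubes ∧ r < longDist Q S}).Countable :=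
      W.countable_cubes.mono (fun S hS => hS.1)
    exact h1.to_subtype
  -- volume of B
  have hvol : volume B = ENNReal.ofReal ((2^(k+3)*r)^d) := by
    rw [hBdef, Real.volume_pi_closedBall _ hR.le, Fintype.card_fin]
    congr 1
    rw [hRdef]; ring
  have hvol0 : volume B ≠ 0 := (Metric.measure_closedBall_pos volume _ hR).ne'
  have hvoltop : volume B ≠ ⊤ := measure_closedBall_lt_top.ne
  set I := ⨅ y ∈ Q.toSet, maximal d g y with hIdef
  -- integral over B bounded by I * volume B
  have havg : (∫⁻ z in B, g z) / volume B ≤ I := by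
    refine le_iInf₂ fun y hy => ?_
    exact le_maximal g Q.center hR (hQB hy)
  have hintB : (∫⁻ z in B, g z) ≤ I * volume B :=
    (ENNReal.div_le_iff_le_mul (Or.inl hvol0) (Or.inl hvoltop)).1 havg
  -- sum of integrals over cubes bounded by integral over B
  have hsum_int : ∑' S : ιk, (∫⁻ y in (S.1.1 : Cube d).toSet, g y) ≤ ∫⁻ z in B, g z := by
    have hAE : Pairwise (Function.onFun (MeasureTheory.AEDisjoint volume) fun S : ιk => (S.1.1 : Cube d).toSet) := by
      intro i j hij
      have hne : (i.1.1 : Cube d) ≠ j.1.1 := fun h => hij (Subtype.ext (Subtype.ext h))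
      exact W.inter_null i.1.2.1 j.1.2.1 hne
    have heq := lintegral_iUnion₀ (μ := volume) (s := fun S : ιk => (S.1.1 : Cube d).toSet)
      (fun S => measurableSet_closedBall.nullMeasurableSet) hAE g
    rw [← heq]
    exact lintegral_mono_set (Set.iUnion_subset fun S => hSB S)
  -- denominator bound
  have hden : ∀ S : ιk, ENNReal.ofReal ((2^k*r) ^ ((d:ℝ)+η)) ≤
      ENNReal.ofReal (longDist Q S.1.1 ^ ((d:ℝ)+η)) := by
    intro S
    exact ENNReal.ofReal_le_ofReal
      (Real.rpow_le_rpow hkr.le (hlower S) (by positivity))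
  calc ∑' S : ιk, (∫⁻ y in (S.1 : Cube d).toSet, g y) /
        ENNReal.ofReal (longDist Q (S.1 : Cube d) ^ ((d : ℝ) + η))
      ≤ ∑' S : ιk, (∫⁻ y in (S.1.1 : Cube d).toSet, g y) /
        ENNReal.ofReal ((2^k*r) ^ ((d:ℝ)+η)) :=
        ENNReal.tsum_le_tsum fun S => ENNReal.div_le_div le_rfl (hden S)
    _ = (∑' S : ιk, ∫⁻ y in (S.1.1 : Cube d).toSet, g y) /
        ENNReal.ofReal ((2^k*r) ^ ((d:ℝ)+η)) := by
        simp only [div_eq_mul_inv]; exact ENNReal.tsum_mul_right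
    _ ≤ (∫⁻ z in B, g z) / ENNReal.ofReal ((2^k*r) ^ ((d:ℝ)+η)) :=
        ENNReal.div_le_div hsum_int le_rfl
    _ ≤ I * volume B / ENNReal.ofReal ((2^k*r) ^ ((d:ℝ)+η)) :=
        ENNReal.div_le_div hintB le_rfl
    _ = I * ENNReal.ofReal (8 ^ d * ((2:ℝ) ^ (-η : ℝ)) ^ k) / ENNReal.ofReal (r ^ η) := by
        rw [hvol, mul_div_assoc, mul_div_assoc]
        congr 1
        rw [← ENNReal.ofReal_div_of_pos (Real.rpow_pos_of_pos hkr _),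
          key_real d hr k,
          ENNReal.ofReal_div_of_pos (Real.rpow_pos_of_pos hr _)]


/-- for a Whitney covering `W` of a domain `Ω`, `Q ∈ W`, `η > 0`, `r > 0`, and
nonnegative `g ∈ L¹(Ω)`,
`Σ_{S ∈ W, D(Q,S) > r} (∫_S g) / D(Q,S)^{d+η} ≤ C_d · (inf_{y∈Q} Mg(y)) / r^η`. -/
theorem stmt_7 (d : ℕ) (hd : 1 ≤ d) (η : ℝ) (hη : 0 < η) :
    ∃ C : ℝ≥0∞, C ≠ ⊤ ∧
      ∀ (Ω : Set (Fin d → ℝ)), IsOpen Ω → IsConnected Ω → Ω ≠ Set.univ →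
      ∀ (W : WhitneyCovering d Ω) (Q : Cube d), Q ∈ W.cubes →
      ∀ (g : (Fin d → ℝ) → ℝ≥0∞), Measurable g → (∫⁻ x in Ω, g x) ≠ ⊤ →
      ∀ r : ℝ, 0 < r →
      (∑' S : {S : Cube d // S ∈ W.cubes ∧ r < longDist Q S},
          (∫⁻ y in (S : Cube d).toSet, g y) /
            ENNReal.ofReal (longDist Q (S : Cube d) ^ ((d : ℝ) + η))) ≤
        C * (⨅ y ∈ Q.toSet, maximal d g y) / ENNReal.ofReal (r ^ η) := by
  set q : ℝ≥0∞ := ENNReal.ofReal ((2:ℝ) ^ (-η : ℝ)) with hqdef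
  have hq0 : (0:ℝ) ≤ (2:ℝ) ^ (-η : ℝ) := (Real.rpow_pos_of_pos two_pos _).le
  have hqlt : q < 1 := by
    rw [hqdef, show (1:ℝ≥0∞) = ENNReal.ofReal 1 by simp]
    exact (ENNReal.ofReal_lt_ofReal_iff one_pos).2
      (Real.rpow_lt_one_of_one_lt_of_neg one_lt_two (neg_neg_of_pos hη))
  have hsubne : (1 : ℝ≥0∞) - q ≠ 0 := (tsub_pos_of_lt hqlt).ne'
  refine ⟨ENNReal.ofReal (8 ^ d) * (1 - q)⁻¹, ?_, ?_⟩
  · exact ENNReal.mul_ne_top ENNReal.ofReal_ne_top (ENNReal.inv_ne_top.2 hsubne)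
  intro Ω hΩopen hΩconn hΩne W Q hQ g hg hgint r hr
  set ι := {S : Cube d // S ∈ W.cubes ∧ r < longDist Q S} with hιdef
  set κ : ι → ℕ := fun S => Nat.log 2 ⌊longDist Q S.1 / r⌋₊ with hκdef
  set f : ι → ℝ≥0∞ := fun S =>
    (∫⁻ y in (S : Cube d).toSet, g y) /
      ENNReal.ofReal (longDist Q (S : Cube d) ^ ((d : ℝ) + η)) with hfdef
  set I := ⨅ y ∈ Q.toSet, maximal d g y with hIdef
  have hsplit : ∑' S : ι, f S = ∑' k : ℕ, ∑' S : {S : ι // κ S = k}, f S.1 := by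
    rw [← Equiv.tsum_eq (Equiv.sigmaFiberEquiv κ) f]
    exact ENNReal.tsum_sigma' _
  have hterm : ∀ k : ℕ,
      I * ENNReal.ofReal (8 ^ d * ((2:ℝ) ^ (-η : ℝ)) ^ k) / ENNReal.ofReal (r ^ η)
        = (I * ENNReal.ofReal (8 ^ d) / ENNReal.ofReal (r ^ η)) * q ^ k := by
    intro k
    rw [ENNReal.ofReal_mul (by positivity), ENNReal.ofReal_pow hq0, ← hqdef]
    simp only [div_eq_mul_inv]; ring
  calc ∑' S : ι, f S = ∑' k : ℕ, ∑' S : {S : ι // κ S = k}, f S.1 := hsplit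
    _ ≤ ∑' k : ℕ,
        I * ENNReal.ofReal (8 ^ d * ((2:ℝ) ^ (-η : ℝ)) ^ k) / ENNReal.ofReal (r ^ η) :=
      ENNReal.tsum_le_tsum fun k => group_bound d hη W Q g hr k
    _ = ∑' k : ℕ, (I * ENNReal.ofReal (8 ^ d) / ENNReal.ofReal (r ^ η)) * q ^ k := by
      exact tsum_congr hterm
    _ = (I * ENNReal.ofReal (8 ^ d) / ENNReal.ofReal (r ^ η)) * (1 - q)⁻¹ := by
      rw [ENNReal.tsum_mul_left, ENNReal.tsum_geometric]
    _ = ENNReal.ofReal (8 ^ d) * (1 - q)⁻¹ * I / ENNReal.ofReal (r ^ η) := by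
      simp only [div_eq_mul_inv]; ring
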